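/- Let q ≥ 3 be an integer, let Π be a finite projective plane of order q, set δ = 1/√((q+1)·ln(q+1)), and let μ be an integer with 2 ≤ μ ≤ ((1−δ)·q − δ + 1)/2 + 1. Then Π contains a (1, μ)-saturating set of size at most 2·(2μ−1)·√((q+1)·ln(q+1)) + 2. -/

import Mathlib

set_option maxHeartbeats 1600000

open scoped Classical in
/-- The number of secants of a point set `S` through a point `Q`, counted with multiplicity:
the multiplicity of a line `ℓ` is `C(#(ℓ ∩ S), 2)`. -/
noncomputable def secantCount (L : Type*) {P : Type*} [Membership P L] [Fintype L]
    (S : Set P) (Q : P) : ℕ :=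
  ∑ ℓ : L, if Q ∈ ℓ then ({p ∈ S | p ∈ ℓ}.ncard).choose 2 else 0

/-- A point set `S` in a projective plane (with line type `L`) is *(1,μ)-saturating* if for
every point `Q` not in `S` the number of secants of `S` through `Q`, counted with
multiplicity, is at least `μ`. -/
def IsMuSaturating (L : Type*) {P : Type*} [Membership P L] [Fintype L]
    (S : Set P) (μ : ℕ) : Prop :=
  ∀ Q : P, Q ∉ S → μ ≤ secantCount L S Q


lemma aux_choose_le_pow (k j : ℕ) : k.choose j ≤ k ^ j := by
  calc k.choose j ≤ k.choose j * j.factorial := Nat.le_mul_of_pos_right _ (Nat.factorial_pos j)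
    _ = k.descFactorial j := by
        rw [Nat.descFactorial_eq_factorial_mul_choose]; ring
    _ ≤ k ^ j := Nat.descFactorial_le_pow k j

lemma aux_N1' (a c : ℕ) : ∀ m : ℕ, (a + c) ^ m * a.choose m ≤ a ^ m * (a + c).choose m := by
  intro m
  induction m with
  | zero => simp
  | succ m ih =>
    rcases le_or_gt (m + 1) a with hm | hm
    · apply Nat.le_of_mul_le_mul_right (c := m + 1) _ (Nat.succ_pos m)
      have h1 : a.choose (m+1) * (m+1) = a.choose m * (a - m) := Nat.choose_succ_right_eq a m
      have h2 : (a+c).choose (m+1) * (m+1) = (a+c).choose m * (a + c - m) :=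
        Nat.choose_succ_right_eq (a+c) m
      obtain ⟨d, hd⟩ : ∃ d, a = d + m := ⟨a - m, by omega⟩
      have h3 : a - m = d := by omega
      have h4 : a + c - m = d + c := by omega
      calc (a + c) ^ (m+1) * a.choose (m+1) * (m+1)
          = ((a + c) * (a - m)) * ((a + c) ^ m * a.choose m) := by rw [mul_assoc, h1]; ring
        _ ≤ ((a + c) * (a - m)) * (a ^ m * (a + c).choose m) := Nat.mul_le_mul_left _ ih
        _ ≤ (a * (a + c - m)) * (a ^ m * (a + c).choose m) := by
            apply Nat.mul_le_mul_right
            rw [h3, h4, hd]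
            nlinarith
        _ = a ^ (m+1) * ((a+c).choose (m+1) * (m+1)) := by rw [h2]; ring
        _ = a ^ (m+1) * (a+c).choose (m+1) * (m+1) := by ring
    · rw [Nat.choose_eq_zero_of_lt hm, mul_zero]
      exact Nat.zero_le _

lemma aux_N1 (q k : ℕ) (hk : k ≤ q) (m : ℕ) :
    q ^ m * (q - k).choose m ≤ (q - k) ^ m * q.choose m := by
  have h := aux_N1' (q - k) k m
  have : q - k + k = q := by omega
  rwa [this] at h

lemma aux_N2' (a k : ℕ) : ∀ j ≤ k, (a + 1) ^ j * (a + k).choose (k - j) ≤ k ^ j * (a + k).choose k := by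
  intro j
  induction j with
  | zero => simp
  | succ j ih =>
    intro hj
    have ihj := ih (by omega)
    obtain ⟨i, hi⟩ : ∃ i, k = i + 1 + j := ⟨k - j - 1, by omega⟩
    have h3 : k - (j + 1) = i := by omega
    have h4 : k - j = i + 1 := by omega
    have hpos : 0 < a + j + 1 := by omega
    apply Nat.le_of_mul_le_mul_right (c := a + j + 1) _ hpos
    have hid : (a+k).choose (i+1) * (i+1) = (a+k).choose i * (a + k - i) :=
      Nat.choose_succ_right_eq (a+k) i
    have h5 : a + k - i = a + j + 1 := by omega
    rw [h5] at hid
    calc (a + 1) ^ (j+1) * (a+k).choose (k - (j+1)) * (a + j + 1)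
        = (a + 1) * ((a + 1) ^ j * ((a+k).choose i * (a + j + 1))) := by rw [h3]; ring
      _ = ((a + 1) * (i + 1)) * ((a + 1) ^ j * (a+k).choose (i+1)) := by rw [← hid]; ring
      _ = ((a + 1) * (i + 1)) * ((a + 1) ^ j * (a+k).choose (k - j)) := by rw [h4]
      _ ≤ ((a + 1) * (i + 1)) * (k ^ j * (a+k).choose k) := Nat.mul_le_mul_left _ ihj
      _ = ((i + 1) * (a + 1)) * (k ^ j * (a+k).choose k) := by ring
      _ ≤ (k * (a + j + 1)) * (k ^ j * (a+k).choose k) := by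
          apply Nat.mul_le_mul_right
          apply Nat.mul_le_mul <;> omega
      _ = k ^ (j+1) * (a+k).choose k * (a + j + 1) := by ring
    
lemma aux_N2 (q k : ℕ) (hk : k ≤ q) (j : ℕ) (hj : j ≤ k) :
    (q - k + 1) ^ j * q.choose (k - j) ≤ k ^ j * q.choose k := by
  have h := aux_N2' (q - k) k j hj
  have : q - k + k = q := by omega
  rwa [this] at h


open Finset in
lemma aux_count (α : Type*) [DecidableEq α] (A M : Finset α) (hMA : M ⊆ A) (k μ : ℕ)
    (hM : M.card = k) :
    ((A.powersetCard k).filter (fun S => (S ∩ M).card < μ)).card ≤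
      ∑ j ∈ range μ, k.choose j * (A.card - k).choose (k - j) := by
  have hcard : ∑ j ∈ range μ, k.choose j * (A.card - k).choose (k - j)
      = ((range μ).sigma (fun j => (M.powersetCard j) ×ˢ ((A \ M).powersetCard (k - j)))).card := by
    rw [card_sigma]
    refine Finset.sum_congr rfl fun j _ => ?_
    rw [card_product, card_powersetCard, card_powersetCard, hM, card_sdiff_of_subset hMA, hM]
  rw [hcard]
  apply card_le_card_of_injOn (fun S => ⟨(S ∩ M).card, (S ∩ M, S \ M)⟩)
  · intro S hS
    simp only [coe_filter, Set.mem_setOf_eq, mem_filter, mem_powersetCard] at hS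
    obtain ⟨⟨hSA, hSk⟩, hSμ⟩ := hS
    simp only [mem_coe, mem_sigma, mem_range, mem_product, mem_powersetCard]
    have hc := Finset.card_inter_add_card_sdiff S M
    exact ⟨hSμ, ⟨inter_subset_right, trivial⟩,
      sdiff_subset_sdiff hSA (Finset.Subset.refl M), by omega⟩
  · intro S hS S' hS' h
    have h' := congrArg (fun x : (Σ _ : ℕ, Finset α × Finset α) => x.2) h
    simp only [Prod.mk.injEq] at h'
    have h1 : S ∩ M = S' ∩ M := h'.1
    have h2 : S \ M = S' \ M := h'.2
    calc S = S \ M ∪ S ∩ M := (sdiff_union_inter S M).symm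
      _ = S' \ M ∪ S' ∩ M := by rw [h1, h2]
      _ = S' := sdiff_union_inter S' M



private lemma aux9 {s : ℝ} (h : 2 ≤ s) : 5*s^2 ≤ 9*(s-1/2)^2 := by nlinarith

private lemma aux5 {m : ℝ} (h : 3 ≤ m) : 9*(m+2) ≤ 5*m^2 := by nlinarith

private lemma auxms {m s : ℝ} (hm : 3 ≤ m) (hs : 2 ≤ s) :
    (m+2)*s^2 ≤ m^2*(s-1/2)^2 := by
  have h1 : (9*(m+2))*s^2 ≤ (5*m^2)*s^2 :=
    mul_le_mul_of_nonneg_right (aux5 hm) (sq_nonneg s)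
  have h2 : m^2*(5*s^2) ≤ m^2*(9*(s-1/2)^2) :=
    mul_le_mul_of_nonneg_left (aux9 hs) (sq_nonneg m)
  nlinarith [h1, h2]

private lemma aux_two_le {s : ℝ} (h0 : 0 ≤ s) (h4 : 4 ≤ s^2) : 2 ≤ s := by nlinarith

open Finset Real in
lemma aux_key (q k μ : ℕ) (hq : 3 ≤ q) (hμ : 2 ≤ μ)
    (hμq : (μ : ℝ) ≤ ((q : ℝ) + 3) / 2)
    (hkq : k < q)
    (hklow : (2 * (μ:ℝ) - 1) * Real.sqrt (((q:ℝ)+1) * Real.log ((q:ℝ)+1)) - 1/2 < (k:ℝ)) :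
    ((q:ℝ)+1)^2 * ((∑ j ∈ range μ, k.choose j * (q - k).choose (k - j) : ℕ) : ℝ)
      < (q.choose k : ℝ) := by
  have hq3 : (3:ℝ) ≤ (q:ℝ) := by exact_mod_cast hq
  set Lg : ℝ := Real.log ((q:ℝ)+1) with hLg
  set s : ℝ := Real.sqrt (((q:ℝ)+1) * Lg) with hs
  have hqpos : (0:ℝ) < (q:ℝ) := by linarith
  have hLg1 : (1:ℝ) ≤ Lg := by
    rw [hLg, Real.le_log_iff_exp_le (by linarith)]
    have := Real.exp_one_lt_d9
    linarith
  have hLgpos : (0:ℝ) < Lg := by linarith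
  have hssq : s^2 = ((q:ℝ)+1) * Lg := Real.sq_sqrt (by positivity)
  have hs0 : 0 ≤ s := Real.sqrt_nonneg _
  have hs2 : (2:ℝ) ≤ s := by
    apply aux_two_le hs0
    rw [hssq]
    calc (4:ℝ) = 4 * 1 := by norm_num
      _ ≤ ((q:ℝ)+1) * Lg := mul_le_mul (by linarith) hLg1 (by norm_num) (by linarith)
  set m : ℝ := 2*(μ:ℝ) - 1 with hmdef
  have hμR : (2:ℝ) ≤ (μ:ℝ) := by exact_mod_cast hμ
  have hm3 : (3:ℝ) ≤ m := by rw [hmdef]; linarith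
  have hexpand : m * (s - 1/2) = m*s - m*(1/2) := by ring
  have hklow' : m * (s - 1/2) < (k:ℝ) := by
    rw [hexpand]; rw [hmdef] at hklow ⊢; linarith
  have hsk15 : (3:ℝ)/2 ≤ s - 1/2 := by linarith
  have hmlow : m * (3/2) ≤ m * (s - 1/2) :=
    mul_le_mul_of_nonneg_left hsk15 (by linarith)
  have hkpos : (0:ℝ) < (k:ℝ) := by
    rw [hmdef] at hmlow hexpand; linarith [hklow', hmlow]
  have hμltk : (μ:ℝ) < (k:ℝ) := by
    rw [hmdef] at hmlow; linarith [hklow', hmlow]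
  have hμk : μ ≤ k := by exact_mod_cast hμltk.le
  have hCpos : (0:ℝ) < (q.choose k : ℝ) := by
    exact_mod_cast Nat.choose_pos hkq.le
  clear_value Lg s m
  by_cases hcase : q + μ ≤ 2*k
  · have hzero : (∑ j ∈ range μ, k.choose j * (q - k).choose (k - j)) = 0 := by
      apply Finset.sum_eq_zero
      intro j hj
      rw [mem_range] at hj
      have : q - k < k - j := by omega
      rw [Nat.choose_eq_zero_of_lt this, mul_zero]
    rw [hzero]
    simpa using hCpos
  · push_neg at hcase
    set C : ℝ := (q.choose k : ℝ) with hC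
    set b : ℝ := ((q:ℝ) - k)/(q:ℝ) with hb
    set r : ℝ := (k:ℝ)^2 / ((q:ℝ) - k + 1) with hr
    have hkq' : (k:ℝ) < (q:ℝ) := by exact_mod_cast hkq
    have hqk1 : (1:ℝ) ≤ (q:ℝ) - k + 1 := by linarith
    have hb0 : 0 ≤ b := by
      rw [hb]; exact div_nonneg (by linarith) hqpos.le
    have hb1 : b ≤ 1 := by rw [hb, div_le_one hqpos]; linarith
    have hks : s ≤ (k:ℝ) := by
      have h3 : 3 * (s - 1/2) ≤ m * (s - 1/2) :=
        mul_le_mul_of_nonneg_right hm3 (by linarith)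
      linarith [hklow', h3]
    have hk2 : ((q:ℝ)+1) ≤ (k:ℝ)^2 := by
      have h1 : s^2 ≤ (k:ℝ)^2 := pow_le_pow_left₀ hs0 hks 2
      rw [hssq] at h1
      have h2 : ((q:ℝ)+1) * 1 ≤ ((q:ℝ)+1) * Lg :=
        mul_le_mul_of_nonneg_left hLg1 (by linarith)
      linarith
    have hr1 : (1:ℝ) ≤ r := by
      rw [hr, le_div_iff₀ (by linarith : (0:ℝ) < (q:ℝ) - k + 1)]
      linarith
    have hr0 : (0:ℝ) ≤ r := by linarith
    set e : ℕ := k - (μ - 1) with he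
    have heR : ((e:ℕ):ℝ) = (k:ℝ) - (μ:ℝ) + 1 := by
      have h1 : μ - 1 ≤ k := by omega
      rw [he]
      push_cast [Nat.cast_sub h1, Nat.cast_sub (by omega : 1 ≤ μ)]
      ring
    have hsum : ((∑ j ∈ range μ, k.choose j * (q - k).choose (k - j) : ℕ) : ℝ)
        ≤ (μ:ℝ) * (C * (r^(μ-1) * b^e)) := by
      push_cast
      calc ∑ j ∈ range μ, (k.choose j : ℝ) * ((q - k).choose (k - j) : ℝ)
          ≤ ∑ j ∈ range μ, C * (r^(μ-1) * b^e) := by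
            apply Finset.sum_le_sum
            intro j hj
            rw [mem_range] at hj
            have hjk : j ≤ k := le_trans (by omega) hμk
            have hcast : (((q-k):ℕ):ℝ) = (q:ℝ) - k := by
              rw [Nat.cast_sub hkq.le]
            have h1 : ((q - k).choose (k - j) : ℝ) ≤ b^(k-j) * (q.choose (k - j) : ℝ) := by
              have hN1 := aux_N1 q k hkq.le (k - j)
              have hN1R : ((q:ℝ))^(k-j) * ((q - k).choose (k - j) : ℝ)
                  ≤ ((q:ℝ) - k)^(k-j) * (q.choose (k - j) : ℝ) := by
                have h := (Nat.cast_le (α := ℝ)).mpr hN1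
                push_cast at h
                rwa [hcast] at h
              rw [hb, div_pow]
              rw [div_mul_eq_mul_div, le_div_iff₀ (by positivity)]
              calc ((q - k).choose (k - j) : ℝ) * (q:ℝ)^(k-j)
                  = ((q:ℝ))^(k-j) * ((q - k).choose (k - j) : ℝ) := by ring
                _ ≤ ((q:ℝ) - k)^(k-j) * (q.choose (k - j) : ℝ) := hN1R
            have h2 : (q.choose (k - j) : ℝ) ≤ ((k:ℝ)/((q:ℝ)-k+1))^j * C := by
              have hN2 := aux_N2 q k hkq.le j hjk
              have hN2R : ((q:ℝ)-k+1)^j * (q.choose (k - j) : ℝ) ≤ (k:ℝ)^j * C := by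
                have h := (Nat.cast_le (α := ℝ)).mpr hN2
                push_cast at h
                rwa [hcast] at h
              rw [div_pow, div_mul_eq_mul_div, le_div_iff₀ (by positivity)]
              calc (q.choose (k - j) : ℝ) * ((q:ℝ)-k+1)^j
                  = ((q:ℝ)-k+1)^j * (q.choose (k - j) : ℝ) := by ring
                _ ≤ (k:ℝ)^j * C := hN2R
            have h3 : (k.choose j : ℝ) ≤ (k:ℝ)^j := by exact_mod_cast aux_choose_le_pow k j
            have hrj : (k:ℝ)^j * ((k:ℝ)/((q:ℝ)-k+1))^j = r^j := by
              rw [hr, ← mul_pow]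
              congr 1
              ring
            have hstep : (k.choose j : ℝ) * ((q - k).choose (k - j) : ℝ)
                ≤ r^j * b^(k-j) * C := by
              calc (k.choose j : ℝ) * ((q - k).choose (k - j) : ℝ)
                  ≤ (k:ℝ)^j * (b^(k-j) * (q.choose (k - j) : ℝ)) := by
                    apply mul_le_mul h3 h1 (by positivity) (by positivity)
                _ ≤ (k:ℝ)^j * (b^(k-j) * (((k:ℝ)/((q:ℝ)-k+1))^j * C)) := by
                    apply mul_le_mul_of_nonneg_left _ (by positivity)
                    apply mul_le_mul_of_nonneg_left h2 (pow_nonneg hb0 _)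
                _ = ((k:ℝ)^j * ((k:ℝ)/((q:ℝ)-k+1))^j) * b^(k-j) * C := by ring
                _ = r^j * b^(k-j) * C := by rw [hrj]
            refine le_trans hstep ?_
            have hrmono : r^j ≤ r^(μ-1) := pow_le_pow_right₀ hr1 (by omega)
            have hbmono : b^(k-j) ≤ b^e := by
              apply pow_le_pow_of_le_one hb0 hb1
              omega
            calc r^j * b^(k-j) * C ≤ r^(μ-1) * b^e * C := by
                  apply mul_le_mul_of_nonneg_right _ hCpos.le
                  exact mul_le_mul hrmono hbmono (pow_nonneg hb0 _) (pow_nonneg hr0 _)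
              _ = C * (r^(μ-1) * b^e) := by ring
        _ = (μ:ℝ) * (C * (r^(μ-1) * b^e)) := by
            rw [Finset.sum_const, card_range, nsmul_eq_mul]
    have hfrac : ((q:ℝ)+1)^2 * ((μ:ℝ) * (r^(μ-1) * b^e)) < 1 := by
      have hbexp : b^e ≤ Real.exp (-((k:ℝ)/q) * e) := by
        have h1 : b ≤ Real.exp (-((k:ℝ)/q)) := by
          have h2 := Real.add_one_le_exp (-((k:ℝ)/q))
          have hbeq : b = 1 - (k:ℝ)/q := by rw [hb]; field_simp
          rw [hbeq]; linarith
        calc b^e ≤ (Real.exp (-((k:ℝ)/q)))^e := pow_le_pow_left₀ hb0 h1 e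
          _ = Real.exp (-((k:ℝ)/q) * e) := by
              rw [← Real.exp_nat_mul]; ring_nf
      have hrbound : r^(μ-1) ≤ (((q:ℝ)+1)^2)^(μ-1) := by
        apply pow_le_pow_left₀ hr0
        calc r ≤ (k:ℝ)^2 := by
              rw [hr]; exact div_le_self (by positivity) hqk1
          _ ≤ ((q:ℝ)+1)^2 := by nlinarith [hkq', hkpos]
      have hμb : (μ:ℝ) ≤ (q:ℝ)+1 := by linarith
      have hchain : ((q:ℝ)+1)^2 * ((μ:ℝ) * (r^(μ-1) * b^e))
          ≤ ((q:ℝ)+1)^(2*μ+1) * Real.exp (-((k:ℝ)/q) * e) := by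
        have h4 : ((q:ℝ)+1)^2 * (((q:ℝ)+1) * ((((q:ℝ)+1)^2)^(μ-1) * 1))
            = ((q:ℝ)+1)^(2*μ+1) := by
          rw [← pow_mul, mul_one, ← pow_succ', ← pow_add]
          congr 1
          omega
        calc ((q:ℝ)+1)^2 * ((μ:ℝ) * (r^(μ-1) * b^e))
            ≤ ((q:ℝ)+1)^2 * (((q:ℝ)+1) * ((((q:ℝ)+1)^2)^(μ-1) * Real.exp (-((k:ℝ)/q) * e))) := by
              apply mul_le_mul_of_nonneg_left _ (by positivity)
              apply mul_le_mul hμb _ (by positivity) (by positivity)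
              apply mul_le_mul hrbound hbexp (pow_nonneg hb0 _) (by positivity)
          _ = (((q:ℝ)+1)^2 * (((q:ℝ)+1) * ((((q:ℝ)+1)^2)^(μ-1) * 1))) * Real.exp (-((k:ℝ)/q) * e) := by
              ring
          _ = ((q:ℝ)+1)^(2*μ+1) * Real.exp (-((k:ℝ)/q) * e) := by rw [h4]
      refine lt_of_le_of_lt hchain ?_
      have hqexp : ((q:ℝ)+1) = Real.exp Lg := by
        rw [hLg, Real.exp_log (by linarith)]
      have hpoweq : ((q:ℝ)+1)^(2*μ+1) = Real.exp ((2*(μ:ℝ)+1) * Lg) := by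
        rw [hqexp, ← Real.exp_nat_mul]
        congr 1
        push_cast
        ring
      have hnumeric : (2*(μ:ℝ)+1) * Lg < ((k:ℝ)/q) * e := by
        rw [heR]
        have h1 : m * (s - 1/2) < (k:ℝ) - (μ:ℝ) + 1 := by
          rw [hexpand]
          linarith [hklow, hmdef]
        have hmspos : (0:ℝ) < m * (s - 1/2) := by
          have : (0:ℝ) < 3 * (3/2) := by norm_num
          calc (0:ℝ) < m * (3/2) := by nlinarith
            _ ≤ m * (s - 1/2) := hmlow
        have hprod : m^2 * (s-1/2)^2 < (k:ℝ) * ((k:ℝ) - (μ:ℝ) + 1) := by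
          have h2 := mul_lt_mul'' hklow' h1 hmspos.le hmspos.le
          calc m^2 * (s-1/2)^2 = (m * (s - 1/2)) * (m * (s - 1/2)) := by ring
            _ < (k:ℝ) * ((k:ℝ) - (μ:ℝ) + 1) := h2
        have hms : (m+2)*s^2 ≤ m^2*(s-1/2)^2 := auxms hm3 hs2
        have hmm : m + 2 = 2*(μ:ℝ)+1 := by rw [hmdef]; ring
        have hBA : (m+2)*s^2 = (m+2)*Lg*(q:ℝ) + (m+2)*Lg := by
          rw [hssq]; ring
        have hpos25 : (0:ℝ) < (m+2)*Lg := by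
          apply mul_pos (by linarith) hLgpos
        have hXA : (m+2)*Lg*(q:ℝ) < (m+2)*s^2 := by linarith [hBA, hpos25]
        have hfin : (2*(μ:ℝ)+1) * Lg * (q:ℝ) < (k:ℝ) * ((k:ℝ) - (μ:ℝ) + 1) := by
          rw [← hmm]
          exact lt_of_le_of_lt (le_of_lt (lt_of_lt_of_le hXA hms)) hprod
        rw [div_mul_eq_mul_div, lt_div_iff₀ hqpos]
        linarith [hfin]
      calc ((q:ℝ)+1)^(2*μ+1) * Real.exp (-((k:ℝ)/q) * e)
          = Real.exp ((2*(μ:ℝ)+1) * Lg + (-((k:ℝ)/q) * e)) := by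
            rw [hpoweq, ← Real.exp_add]
        _ < Real.exp 0 := by
            apply Real.exp_lt_exp.mpr
            linarith [hnumeric]
        _ = 1 := Real.exp_zero
    calc ((q:ℝ)+1)^2 * ((∑ j ∈ range μ, k.choose j * (q - k).choose (k - j) : ℕ) : ℝ)
        ≤ ((q:ℝ)+1)^2 * ((μ:ℝ) * (C * (r^(μ-1) * b^e))) := by
          apply mul_le_mul_of_nonneg_left hsum (by positivity)
      _ = (((q:ℝ)+1)^2 * ((μ:ℝ) * (r^(μ-1) * b^e))) * C := by ring
      _ < 1 * C := mul_lt_mul_of_pos_right hfrac hCpos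
      _ = C := one_mul C


section Geo
open scoped Classical

open Configuration Configuration.Nondegenerate
open Configuration.HasPoints (mkPoint mkPoint_ax)
open Configuration.HasLines (mkLine mkLine_ax)

variable {P L : Type*} [Fintype P] [Fintype L] [Membership P L]
  [Configuration.ProjectivePlane P L]

open scoped Classical in
noncomputable def linePts (L : Type*) {P : Type*} [Membership P L] [Fintype P] (ℓ : L) :
    Finset P := Finset.univ.filter (· ∈ ℓ)

lemma mem_linePts (ℓ : L) (p : P) : p ∈ linePts L ℓ ↔ p ∈ ℓ := by
  classical
  simp [linePts]

lemma card_linePts (ℓ : L) : (linePts L ℓ).card = ProjectivePlane.order P L + 1 := by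
  have h := ProjectivePlane.pointCount_eq P ℓ
  rw [Configuration.pointCount, Nat.card_eq_fintype_card] at h
  rw [linePts, ← Fintype.card_subtype]
  exact h

/-- members of the ncard set -/
lemma ncard_filter_eq (S : Finset P) (ℓ : L) :
    ({p ∈ (↑S : Set P) | p ∈ ℓ}).ncard = (S.filter (fun p => p ∈ ℓ)).card := by
  have : {p ∈ (↑S : Set P) | p ∈ ℓ} = ↑(S.filter (fun p => p ∈ ℓ)) := by
    ext p; simp
  rw [this, Set.ncard_coe_finset]

lemma secant_ge_single (S : Finset P) (Q : P) (ℓ : L) (hQ : Q ∈ ℓ) :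
    ((S.filter (fun p => p ∈ ℓ)).card).choose 2 ≤ secantCount L (↑S : Set P) Q := by
  rw [secantCount]
  have h := Finset.single_le_sum
    (f := fun ℓ' : L => if Q ∈ ℓ' then ({p ∈ (↑S : Set P) | p ∈ ℓ'}.ncard).choose 2 else 0)
    (fun i _ => Nat.zero_le _) (Finset.mem_univ ℓ)
  refine le_trans ?_ h
  rw [if_pos hQ, ncard_filter_eq]

lemma secant_ge_lines (S : Finset P) (Q : P) (T : Finset L)
    (hT : ∀ ℓ ∈ T, Q ∈ ℓ ∧ 2 ≤ (S.filter (fun p => p ∈ ℓ)).card) :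
    T.card ≤ secantCount L (↑S : Set P) Q := by
  rw [secantCount]
  calc T.card = ∑ ℓ ∈ T, 1 := by simp
    _ ≤ ∑ ℓ ∈ T, (if Q ∈ ℓ then ({p ∈ (↑S : Set P) | p ∈ ℓ}.ncard).choose 2 else 0) := by
        apply Finset.sum_le_sum
        intro ℓ hℓ
        rw [if_pos (hT ℓ hℓ).1, ncard_filter_eq]
        have := Nat.choose_pos (hT ℓ hℓ).2
        omega
    _ ≤ ∑ ℓ : L, (if Q ∈ ℓ then ({p ∈ (↑S : Set P) | p ∈ ℓ}.ncard).choose 2 else 0) :=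
        Finset.sum_le_sum_of_subset_of_nonneg (Finset.subset_univ T) (fun _ _ _ => Nat.zero_le _)


open scoped Classical in
/-- Project the point `y` to line `ℓ1` from center `Q`. -/
noncomputable def psiAux {P L : Type*} [Membership P L] [Configuration.ProjectivePlane P L]
    (ℓ1 : L) (Q y : P) : P :=
  if h : Q ≠ y then
    (if h2 : (Configuration.HasLines.mkLine h) = ℓ1 then Q
     else Configuration.HasPoints.mkPoint h2)
  else Q

lemma psiAux_spec {ℓ1 : L} {Q y : P} (hQ1 : Q ∉ ℓ1) (hQy : Q ≠ y) :
    psiAux ℓ1 Q y ∈ ℓ1 ∧ ∃ mline : L, Q ∈ mline ∧ y ∈ mline ∧ psiAux ℓ1 Q y ∈ mline := by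
  have hm := mkLine_ax (P := P) (L := L) hQy
  have h2 : (mkLine (P := P) (L := L) hQy) ≠ ℓ1 := by
    intro h
    exact hQ1 (h ▸ hm.1)
  rw [psiAux, dif_pos hQy, dif_neg h2]
  exact ⟨(mkPoint_ax h2).2, mkLine (P := P) (L := L) hQy, hm.1, hm.2, (mkPoint_ax h2).1⟩

/-- the projection stays away from the intersection point -/
lemma psiAux_ne {ℓ1 ℓ2 : L} {E Q y : P} (hE2 : E ∈ ℓ2)
    (hQ2 : Q ∉ ℓ2) (hy2 : y ∈ ℓ2) (hyE : y ≠ E) (hQ1 : Q ∉ ℓ1) :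
    psiAux ℓ1 Q y ≠ E := by
  have hQy : Q ≠ y := fun h => hQ2 (h ▸ hy2)
  obtain ⟨_, mline, hQm, hym, hpm⟩ := psiAux_spec hQ1 hQy
  intro hpe
  rcases eq_or_eq (P := P) (L := L) hym (hpe ▸ hpm) hy2 hE2 with h | h
  · exact hyE h
  · exact hQ2 (h ▸ hQm)

lemma psiAux_injOn {ℓ1 ℓ2 : L} {Q : P} (hQ1 : Q ∉ ℓ1) (hQ2 : Q ∉ ℓ2)
    {y y' : P} (hy : y ∈ ℓ2) (hy' : y' ∈ ℓ2)
    (heq : psiAux ℓ1 Q y = psiAux ℓ1 Q y') : y = y' := by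
  have hQy : Q ≠ y := fun h => hQ2 (h ▸ hy)
  have hQy' : Q ≠ y' := fun h => hQ2 (h ▸ hy')
  obtain ⟨hx1, m, hQm, hym, hpm⟩ := psiAux_spec hQ1 hQy
  obtain ⟨hx1', m', hQm', hym', hpm'⟩ := psiAux_spec hQ1 hQy'
  rw [heq] at hpm
  have hxQ : psiAux ℓ1 Q y' ≠ Q := by
    rw [heq] at hx1
    exact fun h => hQ1 (h ▸ hx1)
  have hmm' : m = m' := by
    rcases eq_or_eq (P := P) (L := L) hpm hQm hpm' hQm' with h | h
    · exact absurd h hxQ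
    · exact h
  rw [hmm'] at hym
  rcases eq_or_eq (P := P) (L := L) hy hy' hym hym' with h | h
  · exact h
  · exact absurd (h ▸ hQm') hQ2

lemma geo_main (μ : ℕ)
    (ℓ1 ℓ2 : L) (hne : ℓ1 ≠ ℓ2)
    (S1 S2 : Finset P)
    (hS1 : S1 ⊆ (linePts L ℓ1).erase (mkPoint hne))
    (hS2 : S2 ⊆ (linePts L ℓ2).erase (mkPoint hne))
    (hc1 : μ ≤ S1.card) (hc2 : μ ≤ S2.card)
    (hmatch : ∀ Q : P, Q ∉ ℓ1 → Q ∉ ℓ2 → μ ≤ (S1 ∩ S2.image (psiAux ℓ1 Q)).card) :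
    IsMuSaturating L (↑(S1 ∪ S2 ∪ {mkPoint hne}) : Set P) μ := by
  set E : P := mkPoint hne with hE
  have hE1 : E ∈ ℓ1 := (mkPoint_ax hne).1
  have hE2 : E ∈ ℓ2 := (mkPoint_ax hne).2
  set S : Finset P := S1 ∪ S2 ∪ {E} with hS
  have hES : E ∈ S := by simp [hS]
  have hS1S : S1 ⊆ S := fun x hx => by simp [hS, hx]
  have hS2S : S2 ⊆ S := fun x hx => by simp [hS, hx]
  have hS1l : ∀ x ∈ S1, x ∈ ℓ1 ∧ x ≠ E := by
    intro x hx
    have := hS1 hx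
    rw [Finset.mem_erase, mem_linePts] at this
    exact ⟨this.2, this.1⟩
  have hS2l : ∀ x ∈ S2, x ∈ ℓ2 ∧ x ≠ E := by
    intro x hx
    have := hS2 hx
    rw [Finset.mem_erase, mem_linePts] at this
    exact ⟨this.2, this.1⟩
  -- the one-line bound
  have honline : ∀ (ℓ : L) (T : Finset P), T ⊆ S → (∀ x ∈ T, x ∈ ℓ ∧ x ≠ E) → μ ≤ T.card →
      E ∈ ℓ → ∀ Q, Q ∈ ℓ → μ ≤ secantCount L (↑S : Set P) Q := by
    intro ℓ T hTS hTl hTc hEl Q hQl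
    have hsub : insert E T ⊆ S.filter (fun p => p ∈ ℓ) := by
      intro x hx
      rw [Finset.mem_insert] at hx
      rw [Finset.mem_filter]
      rcases hx with h | h
      · exact ⟨h ▸ hES, h ▸ hEl⟩
      · exact ⟨hTS h, (hTl x h).1⟩
    have hcard : T.card + 1 ≤ (S.filter (fun p => p ∈ ℓ)).card := by
      have h1 : (insert E T).card = T.card + 1 := by
        rw [Finset.card_insert_of_notMem]
        intro h
        exact (hTl E h).2 rfl
      rw [← h1]
      exact Finset.card_le_card hsub
    have hch : μ ≤ ((S.filter (fun p => p ∈ ℓ)).card).choose 2 := by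
      have h2 : T.card ≤ (T.card + 1).choose 2 := by
        rw [Nat.choose_two_right]
        rcases Nat.eq_zero_or_pos T.card with h | h
        · simp [h]
        · have : 2 * T.card ≤ (T.card + 1) * (T.card + 1 - 1) := by
            rw [Nat.add_sub_cancel]
            nlinarith [h]
          omega
      calc μ ≤ T.card := hTc
        _ ≤ (T.card + 1).choose 2 := h2
        _ ≤ ((S.filter (fun p => p ∈ ℓ)).card).choose 2 := Nat.choose_le_choose 2 hcard
    exact le_trans hch (secant_ge_single S Q ℓ hQl)
  intro Q hQS
  rw [Finset.mem_coe] at hQS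
  by_cases hQ1 : Q ∈ ℓ1
  · exact honline ℓ1 S1 hS1S hS1l hc1 hE1 Q hQ1
  by_cases hQ2 : Q ∈ ℓ2
  · exact honline ℓ2 S2 hS2S hS2l hc2 hE2 Q hQ2
  -- external point
  have hm := hmatch Q hQ1 hQ2
  set W : Finset P := S1 ∩ S2.image (psiAux ℓ1 Q) with hW
  have hWl1 : ∀ x ∈ W, x ∈ ℓ1 ∧ x ≠ E := by
    intro x hx
    exact hS1l x (Finset.mem_of_mem_inter_left hx)
  have hQnx : ∀ x ∈ W, Q ≠ x := by
    intro x hx h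
    exact hQ1 (h ▸ (hWl1 x hx).1)
  set lineOf : P → L := fun x => if h : Q ≠ x then mkLine h else ℓ1 with hlineOf
  have hkey : ∀ x ∈ W, Q ∈ lineOf x ∧ x ∈ lineOf x ∧
      2 ≤ (S.filter (fun p => p ∈ lineOf x)).card := by
    intro x hx
    have hQx := hQnx x hx
    have hl : lineOf x = mkLine (P := P) (L := L) hQx := by rw [hlineOf]; exact dif_pos hQx
    have hax := mkLine_ax (P := P) (L := L) hQx
    have hx' := hx
    rw [hW, Finset.mem_inter, Finset.mem_image] at hx'
    obtain ⟨hxS1, y, hyS2, hyx⟩ := hx'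
    have hQy : Q ≠ y := fun h => hQ2 (h ▸ (hS2l y hyS2).1)
    obtain ⟨hm1, mline, hQm, hym, hpm⟩ := psiAux_spec hQ1 hQy
    rw [hyx] at hpm
    -- mline = mkLine hQx
    have hmeq : mkLine (P := P) (L := L) hQx = mline := by
      rcases eq_or_eq (P := P) (L := L) hax.1 hax.2 hQm hpm with h | h
      · exact absurd h hQx
      · exact h
    have hyline : y ∈ lineOf x := by rw [hl, hmeq]; exact hym
    have hxy : x ≠ y := by
      intro h
      rcases eq_or_eq (P := P) (L := L) ((hWl1 x hx).1) hE1 (h ▸ (hS2l y hyS2).1) hE2 with h' | h'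
      · exact (hWl1 x hx).2 h'
      · exact hne h'
    have hsub : insert x {y} ⊆ S.filter (fun p => p ∈ lineOf x) := by
      intro z hz
      rw [Finset.mem_insert, Finset.mem_singleton] at hz
      rw [Finset.mem_filter]
      rcases hz with h | h
      · subst h
        refine ⟨hS1S hxS1, ?_⟩
        rw [hl]; exact hax.2
      · subst h
        exact ⟨hS2S hyS2, hyline⟩
    have hc2' : (insert x ({y} : Finset P)).card = 2 := by
      rw [Finset.card_insert_of_notMem (by simpa using hxy), Finset.card_singleton]
    refine ⟨by rw [hl]; exact hax.1, by rw [hl]; exact hax.2, ?_⟩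
    calc 2 = (insert x ({y} : Finset P)).card := hc2'.symm
      _ ≤ _ := Finset.card_le_card hsub
  set T : Finset L := W.image lineOf with hT
  have hTcard : T.card = W.card := by
    rw [hT]
    apply Finset.card_image_of_injOn
    intro x hx x' hx' heq
    have h1 := hkey x hx
    have h2 := hkey x' hx'
    rw [heq] at h1
    rcases eq_or_eq (P := P) (L := L) ((hWl1 x hx).1) ((hWl1 x' hx').1) h1.2.1 h2.2.1 with h | h
    · exact h
    · exact absurd (h ▸ h1.1) hQ1
  refine le_trans (le_trans hm hTcard.ge) (secant_ge_lines S Q T ?_)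
  intro ℓ hℓ
  rw [hT, Finset.mem_image] at hℓ
  obtain ⟨x, hx, hxl⟩ := hℓ
  obtain ⟨ha, hb, hc⟩ := hkey x hx
  rw [← hxl]
  exact ⟨ha, hc⟩

end Geo

private lemma aux_sfacts (q : ℕ) (hq : 3 ≤ q) :
    1 ≤ Real.log ((q:ℝ)+1) ∧ 2 ≤ Real.sqrt (((q:ℝ)+1) * Real.log ((q:ℝ)+1)) := by
  have hq3 : (3:ℝ) ≤ (q:ℝ) := by exact_mod_cast hq
  have hLg1 : (1:ℝ) ≤ Real.log ((q:ℝ)+1) := by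
    rw [Real.le_log_iff_exp_le (by linarith)]
    have := Real.exp_one_lt_d9
    linarith
  refine ⟨hLg1, ?_⟩
  apply aux_two_le (Real.sqrt_nonneg _)
  rw [Real.sq_sqrt (by positivity)]
  calc (4:ℝ) = 4 * 1 := by norm_num
    _ ≤ ((q:ℝ)+1) * Real.log ((q:ℝ)+1) :=
        mul_le_mul (by linarith) hLg1 (by norm_num) (by linarith)


section MainTheorem
open Configuration Configuration.Nondegenerate Finset
open Configuration.HasPoints (mkPoint mkPoint_ax)
open Configuration.HasLines (mkLine mkLine_ax)

theorem mu_saturating_bound_large_mu (q : ℕ) (hq : 3 ≤ q)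
    (P L : Type*) [Fintype P] [Fintype L] [Membership P L]
    [Configuration.ProjectivePlane P L]
    (horder : Configuration.ProjectivePlane.order P L = q)
    (δ : ℝ) (hδ : δ = 1 / Real.sqrt ((q + 1) * Real.log (q + 1)))
    (μ : ℕ) (hμ₁ : 2 ≤ μ) (hμ₂ : (μ : ℝ) ≤ ((1 - δ) * q - δ + 1) / 2 + 1) :
    ∃ S : Finset P, IsMuSaturating L (↑S : Set P) μ ∧
      (S.card : ℝ) ≤ 2 * (2 * (μ : ℝ) - 1) * Real.sqrt ((q + 1) * Real.log (q + 1)) + 2 := by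
  classical
  obtain ⟨p₁, p₂, p₃, l₁, l₂, l₃, h₁₂, h₁₃, h₂₁, h₂₂, h₂₃, h₃₁, h₃₂, h₃₃⟩ :=
    Configuration.ProjectivePlane.exists_config (P := P) (L := L)
  have hne : l₁ ≠ l₂ := fun h => h₂₁ (h ▸ h₂₂)
  set E : P := mkPoint hne with hEdef
  have hE1 : E ∈ l₁ := (mkPoint_ax hne).1
  have hE2 : E ∈ l₂ := (mkPoint_ax hne).2
  set A : Finset P := (linePts L l₁).erase E with hAdef
  set B : Finset P := (linePts L l₂).erase E with hBdef
  have hAcard : A.card = q := by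
    rw [hAdef, Finset.card_erase_of_mem ((mem_linePts l₁ E).mpr hE1), card_linePts, horder]
    omega
  have hBcard : B.card = q := by
    rw [hBdef, Finset.card_erase_of_mem ((mem_linePts l₂ E).mpr hE2), card_linePts, horder]
    omega
  set s : ℝ := Real.sqrt (((q:ℝ)+1) * Real.log ((q:ℝ)+1)) with hsdef
  obtain ⟨hLg1, hs2⟩ := aux_sfacts q hq
  have hs0 : (0:ℝ) ≤ s := Real.sqrt_nonneg _
  have hq3 : (3:ℝ) ≤ (q:ℝ) := by exact_mod_cast hq
  have hμR : (2:ℝ) ≤ (μ:ℝ) := by exact_mod_cast hμ₁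
  have hδpos : 0 < δ := by
    rw [hδ]
    have : (0:ℝ) < Real.sqrt ((q + 1) * Real.log (q + 1)) := by
      rw [show ((q:ℝ) + 1) * Real.log ((q:ℝ)+1) = ((q:ℝ)+1) * Real.log ((q:ℝ)+1) from rfl]
      calc (0:ℝ) < 2 := by norm_num
        _ ≤ s := hs2
    positivity
  have hμq32 : (μ:ℝ) ≤ ((q:ℝ)+3)/2 := by
    have h1 : (1 - δ) * q ≤ q := by nlinarith [hδpos, hq3]
    linarith [hμ₂, hδpos]
  have hμleq : μ ≤ q := by
    have : (μ:ℝ) ≤ (q:ℝ) := by linarith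
    exact_mod_cast this
  -- image transfer facts for external points
  have himg : ∀ Q : P, Q ∉ l₁ → Q ∉ l₂ → ∀ S2 : Finset P, S2 ⊆ B →
      (S2.image (psiAux l₁ Q)).card = S2.card ∧ S2.image (psiAux l₁ Q) ⊆ A := by
    intro Q hQ1 hQ2 S2 hS2B
    have hBfact : ∀ y ∈ S2, y ∈ l₂ ∧ y ≠ E := by
      intro y hy
      have := hS2B hy
      rw [hBdef, Finset.mem_erase, mem_linePts] at this
      exact ⟨this.2, this.1⟩
    constructor
    · apply Finset.card_image_of_injOn
      intro y hy y' hy' heq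
      exact psiAux_injOn hQ1 hQ2 (hBfact y hy).1 (hBfact y' hy').1 heq
    · intro x hx
      rw [Finset.mem_image] at hx
      obtain ⟨y, hy, rfl⟩ := hx
      have hQy : Q ≠ y := fun h => hQ2 (h ▸ (hBfact y hy).1)
      rw [hAdef, Finset.mem_erase, mem_linePts]
      exact ⟨psiAux_ne hE2 hQ2 (hBfact y hy).1 (hBfact y hy).2 hQ1,
        (psiAux_spec hQ1 hQy).1⟩
  by_cases hcaseA : (2*(q:ℝ)+1) ≤ 2*(2*(μ:ℝ)-1)*s + 2
  · -- two full (punctured) lines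
    refine ⟨A ∪ B ∪ {E}, ?_, ?_⟩
    · apply geo_main μ l₁ l₂ hne A B (by rw [hAdef]) (by rw [hBdef])
        (by rw [hAcard]; exact hμleq) (by rw [hBcard]; exact hμleq)
      intro Q hQ1 hQ2
      obtain ⟨hcardim, hsubim⟩ := himg Q hQ1 hQ2 B (Finset.Subset.refl B)
      rw [Finset.inter_eq_right.mpr hsubim, hcardim, hBcard]
      exact hμleq
    · have hcard : (A ∪ B ∪ {E}).card ≤ 2*q + 1 := by
        calc (A ∪ B ∪ {E}).card ≤ (A ∪ B).card + ({E} : Finset P).card :=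
              Finset.card_union_le _ _
          _ ≤ A.card + B.card + 1 := by
              have := Finset.card_union_le A B
              simp only [Finset.card_singleton]
              omega
          _ = 2*q + 1 := by rw [hAcard, hBcard]; ring
      have : ((A ∪ B ∪ {E}).card : ℝ) ≤ 2*(q:ℝ) + 1 := by exact_mod_cast hcard
      calc ((A ∪ B ∪ {E}).card : ℝ) ≤ 2*(q:ℝ) + 1 := this
        _ ≤ 2*(2*(μ:ℝ)-1)*s + 2 := by linarith [hcaseA]
        _ = 2 * (2 * (μ : ℝ) - 1) * Real.sqrt ((q + 1) * Real.log (q + 1)) + 2 := by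
            rw [hsdef]
  · push_neg at hcaseA
    set k : ℕ := ⌊(2*(μ:ℝ)-1)*s + 1/2⌋₊ with hkdef
    have harg0 : (0:ℝ) ≤ (2*(μ:ℝ)-1)*s + 1/2 := by
      have : (0:ℝ) ≤ (2*(μ:ℝ)-1) := by linarith
      nlinarith [mul_nonneg this hs0]
    have hkup : (k:ℝ) ≤ (2*(μ:ℝ)-1)*s + 1/2 := Nat.floor_le harg0
    have hklow : (2*(μ:ℝ)-1)*s - 1/2 < (k:ℝ) := by
      have := Nat.lt_floor_add_one ((2*(μ:ℝ)-1)*s + 1/2)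
      rw [← hkdef] at this
      linarith
    have hkltq : k < q := by
      have h1 : (2*(μ:ℝ)-1)*s < (q:ℝ) - 1/2 := by linarith [hcaseA]
      have : (k:ℝ) < (q:ℝ) := by linarith
      exact_mod_cast this
    have hμlek : μ ≤ k := by
      have h30 : (0:ℝ) ≤ 2*(μ:ℝ)-1 := by linarith
      have h1 : (2*(μ:ℝ)-1) * 2 ≤ (2*(μ:ℝ)-1)*s := mul_le_mul_of_nonneg_left hs2 h30
      have : (μ:ℝ) < (k:ℝ) := by linarith
      exact_mod_cast this.le
    have hchpos : 0 < q.choose k := Nat.choose_pos hkltq.le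
    -- the counting inequality
    have hkeyN : (q+1)^2 * (∑ j ∈ range μ, k.choose j * (q - k).choose (k - j)) < q.choose k := by
      have h := aux_key q k μ hq hμ₁ hμq32 hkltq (by rw [← hsdef]; exact hklow)
      exact_mod_cast h
    set Nbad : ℕ := ∑ j ∈ range μ, k.choose j * (q - k).choose (k - j) with hNbad
    set ext : Finset P := Finset.univ.filter (fun Q => Q ∉ l₁ ∧ Q ∉ l₂) with hext
    have hextcard : ext.card ≤ (q+1)^2 := by
      have h1 : ext.card ≤ Fintype.card P := by
        rw [← Finset.card_univ]
        exact Finset.card_le_card (Finset.filter_subset _ _)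
      have h2 : Fintype.card P = q^2 + q + 1 := by
        rw [Configuration.ProjectivePlane.card_points P L, horder]
      have h3 : (q+1)^2 = q^2 + 2*q + 1 := by ring
      omega
    set 𝒜 : Finset (Finset P) := A.powersetCard k with h𝒜
    set ℬ : Finset (Finset P) := B.powersetCard k with hℬ
    have h𝒜card : 𝒜.card = q.choose k := by
      rw [h𝒜, Finset.card_powersetCard, hAcard]
    have hℬcard : ℬ.card = q.choose k := by
      rw [hℬ, Finset.card_powersetCard, hBcard]
    set pairs : Finset (Finset P × Finset P) := 𝒜 ×ˢ ℬ with hpairs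
    set badp : P → Finset P × Finset P → Prop :=
      fun Q z => (z.1 ∩ z.2.image (psiAux l₁ Q)).card < μ with hbadp
    set F : Finset (Finset P × Finset P) :=
      pairs.filter (fun z => ∃ Q ∈ ext, badp Q z) with hF
    have hperQ : ∀ Q ∈ ext, (pairs.filter (badp Q)).card ≤ q.choose k * Nbad := by
      intro Q hQ
      rw [hext, Finset.mem_filter] at hQ
      obtain ⟨-, hQ1, hQ2⟩ := hQ
      have hsub : pairs.filter (badp Q) ⊆
          ℬ.biUnion (fun S2 => ((𝒜.filter (fun S1 => (S1 ∩ S2.image (psiAux l₁ Q)).card < μ)).image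
            (fun S1 => (S1, S2)))) := by
        intro z hz
        rw [Finset.mem_filter, hpairs, Finset.mem_product] at hz
        obtain ⟨⟨hz1, hz2⟩, hbad⟩ := hz
        rw [Finset.mem_biUnion]
        exact ⟨z.2, hz2, by
          rw [Finset.mem_image]
          exact ⟨z.1, by rw [Finset.mem_filter]; exact ⟨hz1, hbad⟩, by simp⟩⟩
      calc (pairs.filter (badp Q)).card
          ≤ ∑ S2 ∈ ℬ, ((𝒜.filter (fun S1 => (S1 ∩ S2.image (psiAux l₁ Q)).card < μ)).image
              (fun S1 => (S1, S2))).card :=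
            le_trans (Finset.card_le_card hsub) (Finset.card_biUnion_le)
        _ ≤ ∑ S2 ∈ ℬ, Nbad := by
            apply Finset.sum_le_sum
            intro S2 hS2
            have hS2B : S2 ⊆ B := by
              rw [hℬ, Finset.mem_powersetCard] at hS2
              exact hS2.1
            have hS2card : S2.card = k := by
              rw [hℬ, Finset.mem_powersetCard] at hS2
              exact hS2.2
            obtain ⟨hMcard, hMA⟩ := himg Q hQ1 hQ2 S2 hS2B
            calc ((𝒜.filter (fun S1 => (S1 ∩ S2.image (psiAux l₁ Q)).card < μ)).image
                  (fun S1 => (S1, S2))).card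
                ≤ (𝒜.filter (fun S1 => (S1 ∩ S2.image (psiAux l₁ Q)).card < μ)).card :=
                  Finset.card_image_le
              _ ≤ Nbad := by
                  rw [hNbad]
                  have := aux_count P A (S2.image (psiAux l₁ Q)) hMA k μ (by rw [hMcard, hS2card])
                  rw [hAcard] at this
                  rw [h𝒜]
                  exact this
        _ = q.choose k * Nbad := by rw [Finset.sum_const, hℬcard, smul_eq_mul]
    have hFcard : F.card < pairs.card := by
      have h1 : F.card ≤ ∑ Q ∈ ext, (pairs.filter (badp Q)).card := by
        refine le_trans (Finset.card_le_card ?_) (Finset.card_biUnion_le)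
        intro z hz
        rw [hF, Finset.mem_filter] at hz
        obtain ⟨hzp, Q, hQ, hbad⟩ := hz
        rw [Finset.mem_biUnion]
        exact ⟨Q, hQ, by rw [Finset.mem_filter]; exact ⟨hzp, hbad⟩⟩
      have h2 : ∑ Q ∈ ext, (pairs.filter (badp Q)).card ≤ ext.card * (q.choose k * Nbad) := by
        calc ∑ Q ∈ ext, (pairs.filter (badp Q)).card ≤ ∑ Q ∈ ext, q.choose k * Nbad :=
              Finset.sum_le_sum hperQ
          _ = ext.card * (q.choose k * Nbad) := by rw [Finset.sum_const, smul_eq_mul]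
      have h3 : ext.card * (q.choose k * Nbad) ≤ (q+1)^2 * Nbad * q.choose k := by
        calc ext.card * (q.choose k * Nbad) ≤ (q+1)^2 * (q.choose k * Nbad) :=
              Nat.mul_le_mul_right _ hextcard
          _ = (q+1)^2 * Nbad * q.choose k := by ring
      have h4 : (q+1)^2 * Nbad * q.choose k < q.choose k * q.choose k :=
        Nat.mul_lt_mul_of_lt_of_le hkeyN (le_refl _) hchpos
      have h5 : pairs.card = q.choose k * q.choose k := by
        rw [hpairs, Finset.card_product, h𝒜card, hℬcard]
      omega
    have hnsub : ¬ pairs ⊆ F := by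
      intro h
      exact absurd (Finset.card_le_card h) (not_le.mpr hFcard)
    obtain ⟨z, hzp, hzF⟩ := Finset.not_subset.mp hnsub
    have hz1 : z.1 ∈ 𝒜 := (Finset.mem_product.mp (by rwa [hpairs] at hzp)).1
    have hz2 : z.2 ∈ ℬ := (Finset.mem_product.mp (by rwa [hpairs] at hzp)).2
    have hgood : ∀ Q : P, Q ∉ l₁ → Q ∉ l₂ → μ ≤ (z.1 ∩ z.2.image (psiAux l₁ Q)).card := by
      intro Q hQ1 hQ2
      by_contra hlt
      push_neg at hlt
      apply hzF
      rw [hF, Finset.mem_filter]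
      refine ⟨hzp, Q, ?_, hlt⟩
      rw [hext, Finset.mem_filter]
      exact ⟨Finset.mem_univ Q, hQ1, hQ2⟩
    have hz1sub : z.1 ⊆ A := by
      rw [h𝒜, Finset.mem_powersetCard] at hz1; exact hz1.1
    have hz2sub : z.2 ⊆ B := by
      rw [hℬ, Finset.mem_powersetCard] at hz2; exact hz2.1
    have hz1card : z.1.card = k := by
      rw [h𝒜, Finset.mem_powersetCard] at hz1; exact hz1.2
    have hz2card : z.2.card = k := by
      rw [hℬ, Finset.mem_powersetCard] at hz2; exact hz2.2
    refine ⟨z.1 ∪ z.2 ∪ {E}, ?_, ?_⟩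
    · apply geo_main μ l₁ l₂ hne z.1 z.2 (by rw [← hAdef]; exact hz1sub)
        (by rw [← hBdef]; exact hz2sub)
        (by rw [hz1card]; exact hμlek) (by rw [hz2card]; exact hμlek)
      exact hgood
    · have hcard : (z.1 ∪ z.2 ∪ {E}).card ≤ 2*k + 1 := by
        calc (z.1 ∪ z.2 ∪ {E}).card ≤ (z.1 ∪ z.2).card + ({E} : Finset P).card :=
              Finset.card_union_le _ _
          _ ≤ z.1.card + z.2.card + 1 := by
              have := Finset.card_union_le z.1 z.2
              simp only [Finset.card_singleton]
              omega
          _ = 2*k + 1 := by rw [hz1card, hz2card]; ring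
      have h1 : ((z.1 ∪ z.2 ∪ {E}).card : ℝ) ≤ 2*(k:ℝ) + 1 := by exact_mod_cast hcard
      calc ((z.1 ∪ z.2 ∪ {E}).card : ℝ) ≤ 2*(k:ℝ) + 1 := h1
        _ ≤ 2*((2*(μ:ℝ)-1)*s + 1/2) + 1 := by linarith [hkup]
        _ = 2*(2*(μ:ℝ)-1)*s + 2 := by ring
        _ = 2 * (2 * (μ : ℝ) - 1) * Real.sqrt ((q + 1) * Real.log (q + 1)) + 2 := by
            rw [hsdef]

end MainTheorem
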